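/- Let Q be nonnegative on countable S with finite Green's function G, and let B ⊂ S be finite. Define Q^B(x,y) = Σ_{n≥1} Σ over paths x = x_0, x_1, …, x_n = y with x_1,…,x_{n-1} ∉ B of Q(x_0,x_1)⋯Q(x_{n-1},x_n), for x,y ∈ B (the first-return kernel to B). Then the restriction G|_{B×B} is the Green's function of Q^B, i.e., G|_{B×B} = Σ_{k≥0} (Q^B)^k. -/

import Mathlib

open scoped ENNReal

/-- Entrywise matrix powers of a nonnegative kernel `Q` on a countable set `S`. -/
noncomputable def qpow {S : Type*} [DecidableEq S] (Q : S → S → ℝ≥0∞) : ℕ → S → S → ℝ≥0∞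
  | 0 => fun x y => if x = y then 1 else 0
  | n + 1 => fun x y => ∑' z, Q x z * qpow Q n z y

/-- Green's function `G = Σ_{n ≥ 0} Q^n` (entrywise, in `ℝ≥0∞`). -/
noncomputable def green {S : Type*} [DecidableEq S] (Q : S → S → ℝ≥0∞) (x y : S) : ℝ≥0∞ :=
  ∑' n, qpow Q n x y

/-- The first-return kernel `Q^B` to a finite set `B`:
`Q^B(x,y) = Σ_{n≥1} Σ_{x_1,…,x_{n-1} ∉ B} Q(x,x_1)⋯Q(x_{n-1},y)` for `x, y ∈ B`
(and `0` otherwise). -/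
noncomputable def retKer {S : Type*} [DecidableEq S] (Q : S → S → ℝ≥0∞) (B : Finset S)
    (x y : S) : ℝ≥0∞ :=
  if x ∈ B ∧ y ∈ B then
    ∑' (m : ℕ), ∑' z, Q x z * qpow (fun u v => if u ∈ B then 0 else Q u v) m z y
  else 0

section Aux

variable {S : Type*} [DecidableEq S]

/-- The kernel killed on `B`. -/
noncomputable def killKer (Q : S → S → ℝ≥0∞) (B : Finset S) : S → S → ℝ≥0∞ :=
  fun u v => if u ∈ B then 0 else Q u v

/-- First-entry decomposition of a path ending in `B`. -/
lemma first_entry (Q : S → S → ℝ≥0∞) (B : Finset S) {y : S} (hy : y ∈ B) :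
    ∀ n x, qpow Q n x y =
      ∑ τ ∈ Finset.range (n + 1), ∑ z ∈ B,
        qpow (killKer Q B) τ x z * qpow Q (n - τ) z y := by
  intro n
  induction n with
  | zero =>
    intro x
    simp [qpow, Finset.sum_ite_eq', hy]
  | succ n ih =>
    intro x
    rw [Finset.sum_range_succ']
    by_cases hx : x ∈ B
    · have h1 : ∀ i z, qpow (killKer Q B) (i + 1) x z = 0 := by
        intro i z
        simp [qpow, killKer, hx]
      simp only [h1, zero_mul, Finset.sum_const_zero, zero_add]
      simp [qpow, Finset.sum_ite_eq, hx]
    · have h0 : ∑ z ∈ B, qpow (killKer Q B) 0 x z * qpow Q (n + 1 - 0) z y = 0 := by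
        refine Finset.sum_eq_zero fun z hz => ?_
        have : x ≠ z := fun h => hx (h ▸ hz)
        simp [qpow, this]
      rw [h0, add_zero]
      have h1 : ∀ i z, qpow (killKer Q B) (i + 1) x z
          = ∑' z', Q x z' * qpow (killKer Q B) i z' z := by
        intro i z
        simp only [qpow, killKer, hx, if_false]
      have key : ∀ i ∈ Finset.range (n + 1), ∑ z ∈ B,
            qpow (killKer Q B) (i + 1) x z * qpow Q (n + 1 - (i + 1)) z y
          = ∑' z', Q x z' * ∑ z ∈ B,
              qpow (killKer Q B) i z' z * qpow Q (n - i) z y := by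
        intro i _
        calc ∑ z ∈ B, qpow (killKer Q B) (i + 1) x z * qpow Q (n + 1 - (i + 1)) z y
            = ∑ z ∈ B, ∑' z', Q x z' * qpow (killKer Q B) i z' z * qpow Q (n - i) z y := by
              refine Finset.sum_congr rfl fun z _ => ?_
              rw [h1, Nat.succ_sub_succ, ← ENNReal.tsum_mul_right]
          _ = ∑' z', ∑ z ∈ B, Q x z' * qpow (killKer Q B) i z' z * qpow Q (n - i) z y := by
              rw [Summable.tsum_finsetSum fun z _ => ENNReal.summable]
          _ = ∑' z', Q x z' * ∑ z ∈ B,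
                qpow (killKer Q B) i z' z * qpow Q (n - i) z y := by
              refine tsum_congr fun z' => ?_
              rw [Finset.mul_sum]
              exact Finset.sum_congr rfl fun z _ => (mul_assoc _ _ _)
      rw [Finset.sum_congr rfl key, ← Summable.tsum_finsetSum (fun z' _ => ENNReal.summable)]
      show qpow Q (n + 1) x y = _
      simp only [qpow]
      refine tsum_congr fun z' => ?_
      rw [← Finset.mul_sum, ← Finset.sum_congr rfl (fun τ _ => rfl), ih z']

/-- First-return decomposition for one step, starting in `B`. -/
lemma first_return (Q : S → S → ℝ≥0∞) (B : Finset S) {x y : S} (hy : y ∈ B) (n : ℕ) :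
    qpow Q (n + 1) x y =
      ∑ τ ∈ Finset.range (n + 1), ∑ z ∈ B,
        (∑' z', Q x z' * qpow (killKer Q B) τ z' z) * qpow Q (n - τ) z y := by
  have : qpow Q (n + 1) x y = ∑' z', Q x z' * qpow Q n z' y := by simp [qpow]
  rw [this]
  calc ∑' z', Q x z' * qpow Q n z' y
      = ∑' z', Q x z' * ∑ τ ∈ Finset.range (n + 1), ∑ z ∈ B,
          qpow (killKer Q B) τ z' z * qpow Q (n - τ) z y := by
        exact tsum_congr fun z' => by rw [first_entry Q B hy n z']
    _ = ∑' z', ∑ τ ∈ Finset.range (n + 1), ∑ z ∈ B,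
          Q x z' * (qpow (killKer Q B) τ z' z * qpow Q (n - τ) z y) := by
        refine tsum_congr fun z' => ?_
        rw [Finset.mul_sum]
        exact Finset.sum_congr rfl fun τ _ => Finset.mul_sum _ _ _
    _ = ∑ τ ∈ Finset.range (n + 1), ∑ z ∈ B,
          ∑' z', Q x z' * (qpow (killKer Q B) τ z' z * qpow Q (n - τ) z y) := by
        rw [Summable.tsum_finsetSum fun τ _ => ENNReal.summable]
        exact Finset.sum_congr rfl fun τ _ => Summable.tsum_finsetSum fun z _ => ENNReal.summable
    _ = _ := by
        refine Finset.sum_congr rfl fun τ _ => Finset.sum_congr rfl fun z _ => ?_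
        rw [← ENNReal.tsum_mul_right]
        exact tsum_congr fun z' => by ring

/-- Diagonal (Cauchy-product) rearrangement in `ℝ≥0∞`. -/
lemma tsum_range_diag (f : ℕ → ℕ → ℝ≥0∞) :
    ∑' n : ℕ, ∑ τ ∈ Finset.range (n + 1), f τ (n - τ) = ∑' τ, ∑' m, f τ m := by
  have h1 : ∀ n : ℕ, ∑ τ ∈ Finset.range (n + 1), f τ (n - τ)
      = ∑' p : ℕ × ℕ, if p.1 + p.2 = n then f p.1 p.2 else 0 := by
    intro n
    rw [tsum_eq_sum (s := Finset.HasAntidiagonal.antidiagonal n)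
      (fun p hp => by simp_all [Finset.mem_antidiagonal])]
    rw [Finset.Nat.sum_antidiagonal_eq_sum_range_succ_mk]
    refine Finset.sum_congr rfl fun i hi => ?_
    simp [Nat.add_sub_cancel' (Nat.lt_succ_iff.mp (Finset.mem_range.mp hi))]
  calc ∑' n : ℕ, ∑ τ ∈ Finset.range (n + 1), f τ (n - τ)
      = ∑' n : ℕ, ∑' p : ℕ × ℕ, if p.1 + p.2 = n then f p.1 p.2 else 0 := tsum_congr h1
    _ = ∑' p : ℕ × ℕ, ∑' n : ℕ, if p.1 + p.2 = n then f p.1 p.2 else 0 := ENNReal.tsum_comm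
    _ = ∑' p : ℕ × ℕ, f p.1 p.2 := by
        refine tsum_congr fun p => ?_
        rw [tsum_eq_single (p.1 + p.2) (fun n hn => by simp [Ne.symm hn])]
        simp
    _ = ∑' τ, ∑' m, f τ m := ENNReal.tsum_prod

lemma retKer_eq (Q : S → S → ℝ≥0∞) (B : Finset S) {x z : S} (hx : x ∈ B) (hz : z ∈ B) :
    retKer Q B x z = ∑' τ, ∑' z', Q x z' * qpow (killKer Q B) τ z' z := by
  rw [retKer, if_pos ⟨hx, hz⟩]; rfl

lemma retKer_eq_zero (Q : S → S → ℝ≥0∞) (B : Finset S) {x z : S} (h : ¬ (x ∈ B ∧ z ∈ B)) :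
    retKer Q B x z = 0 := by simp [retKer, h]

/-- Fixed-point equation for the Green function restricted to `B`. -/
lemma green_fixed (Q : S → S → ℝ≥0∞) (B : Finset S) {x y : S} (hx : x ∈ B) (hy : y ∈ B) :
    green Q x y = (if x = y then 1 else 0)
      + ∑ z ∈ B, retKer Q B x z * green Q z y := by
  have h0 : green Q x y = qpow Q 0 x y + ∑' n, qpow Q (n + 1) x y :=
    tsum_eq_zero_add' ENNReal.summable
  have h1 : qpow Q 0 x y = (if x = y then 1 else 0) := rfl
  have h2 : ∑' n, qpow Q (n + 1) x y
      = ∑ z ∈ B, retKer Q B x z * green Q z y :=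
    calc ∑' n, qpow Q (n + 1) x y
      = ∑' n, ∑ τ ∈ Finset.range (n + 1), ∑ z ∈ B,
          (∑' z', Q x z' * qpow (killKer Q B) τ z' z) * qpow Q (n - τ) z y :=
        tsum_congr fun n => first_return Q B hy n
    _ = ∑' τ, ∑' m, ∑ z ∈ B,
          (∑' z', Q x z' * qpow (killKer Q B) τ z' z) * qpow Q m z y :=
        tsum_range_diag (fun τ m => ∑ z ∈ B,
          (∑' z', Q x z' * qpow (killKer Q B) τ z' z) * qpow Q m z y)
    _ = ∑' τ, ∑ z ∈ B,
          (∑' z', Q x z' * qpow (killKer Q B) τ z' z) * ∑' m, qpow Q m z y := by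
        refine tsum_congr fun τ => ?_
        refine (Summable.tsum_finsetSum fun z _ => ENNReal.summable).trans ?_
        exact Finset.sum_congr rfl fun z _ => ENNReal.tsum_mul_left
    _ = ∑ z ∈ B, (∑' τ, ∑' z', Q x z' * qpow (killKer Q B) τ z' z) * ∑' m, qpow Q m z y := by
        refine (Summable.tsum_finsetSum fun z _ => ENNReal.summable).trans ?_
        exact Finset.sum_congr rfl fun z _ => ENNReal.tsum_mul_right
    _ = ∑ z ∈ B, retKer Q B x z * green Q z y := by
        refine Finset.sum_congr rfl fun z hz => ?_
        rw [retKer_eq Q B hx hz]; rfl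
  rw [h0, h1, h2]

lemma qpow_retKer_succ' (Q : S → S → ℝ≥0∞) (B : Finset S) (n : ℕ) (x y : S) :
    qpow (retKer Q B) (n + 1) x y = ∑' z, qpow (retKer Q B) n x z * retKer Q B z y := by
  induction n generalizing x y with
  | zero =>
    simp only [qpow]
    rw [tsum_eq_single y (fun z hz => by simp [hz]),
      tsum_eq_single x (fun z hz => by simp [Ne.symm hz])]
    simp
  | succ n ih =>
    show (∑' z, retKer Q B x z * qpow (retKer Q B) (n + 1) z y) = _
    calc ∑' z, retKer Q B x z * qpow (retKer Q B) (n + 1) z y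
        = ∑' z, ∑' w, retKer Q B x z * (qpow (retKer Q B) n z w * retKer Q B w y) := by
          refine tsum_congr fun z => ?_
          rw [ih, ← ENNReal.tsum_mul_left]
      _ = ∑' w, (∑' z, retKer Q B x z * qpow (retKer Q B) n z w) * retKer Q B w y := by
          rw [ENNReal.tsum_comm]
          refine tsum_congr fun w => ?_
          rw [← ENNReal.tsum_mul_right]
          exact tsum_congr fun z => by ring
      _ = _ := tsum_congr fun w => rfl

/-- Partial sums of powers of the return kernel are dominated by the Green function. -/
lemma sum_qpow_retKer_le (Q : S → S → ℝ≥0∞) (B : Finset S) :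
    ∀ N, ∀ x ∈ B, ∀ y ∈ B,
      ∑ k ∈ Finset.range N, qpow (retKer Q B) k x y ≤ green Q x y := by
  intro N
  induction N with
  | zero => intro x _ y _; simp
  | succ N ih =>
    intro x hx y hy
    rw [Finset.sum_range_succ']
    have hsupp : ∀ z, z ∉ B → retKer Q B x z = 0 := fun z hz =>
      retKer_eq_zero Q B (by tauto)
    have step : ∀ k, qpow (retKer Q B) (k + 1) x y
        = ∑ z ∈ B, retKer Q B x z * qpow (retKer Q B) k z y := by
      intro k
      show (∑' z, retKer Q B x z * qpow (retKer Q B) k z y) = _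
      exact tsum_eq_sum fun z hz => by rw [hsupp z hz, zero_mul]
    have hA : ∑ k ∈ Finset.range N, qpow (retKer Q B) (k + 1) x y
        = ∑ z ∈ B, retKer Q B x z * ∑ k ∈ Finset.range N, qpow (retKer Q B) k z y := by
      rw [Finset.sum_congr rfl fun k _ => step k, Finset.sum_comm]
      exact Finset.sum_congr rfl fun z _ => (Finset.mul_sum _ _ _).symm
    have hB : qpow (retKer Q B) 0 x y = (if x = y then 1 else 0) := rfl
    calc (∑ k ∈ Finset.range N, qpow (retKer Q B) (k + 1) x y)
          + qpow (retKer Q B) 0 x y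
        = (if x = y then 1 else 0)
            + ∑ z ∈ B, retKer Q B x z * ∑ k ∈ Finset.range N, qpow (retKer Q B) k z y := by
          rw [hA, hB, add_comm]
      _ ≤ (if x = y then 1 else 0) + ∑ z ∈ B, retKer Q B x z * green Q z y := by
          gcongr with z hz
          exact ih z hz y hy
      _ = green Q x y := (green_fixed Q B hx hy).symm

/-- Telescoping identity: `G = Σ_{k<N} R^k + R^N G` on `B`. -/
lemma green_telescope (Q : S → S → ℝ≥0∞) (B : Finset S) {x y : S} (hx : x ∈ B) (hy : y ∈ B) :
    ∀ N, green Q x y = ∑ k ∈ Finset.range N, qpow (retKer Q B) k x y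
      + ∑ z ∈ B, qpow (retKer Q B) N x z * green Q z y := by
  intro N
  induction N with
  | zero =>
    rw [Finset.sum_eq_single x (fun z _ hz => by simp [qpow, Ne.symm hz]) (fun h => absurd hx h)]
    simp [qpow]
  | succ N ih =>
    rw [Finset.sum_range_succ, ih]
    rw [add_assoc]
    congr 1
    have hrec : ∀ z ∈ B, green Q z y = (if z = y then 1 else 0)
        + ∑ w ∈ B, retKer Q B z w * green Q w y := fun z hz => green_fixed Q B hz hy
    calc ∑ z ∈ B, qpow (retKer Q B) N x z * green Q z y
        = ∑ z ∈ B, (qpow (retKer Q B) N x z * (if z = y then 1 else 0)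
            + ∑ w ∈ B, qpow (retKer Q B) N x z * (retKer Q B z w * green Q w y)) := by
          refine Finset.sum_congr rfl fun z hz => ?_
          rw [hrec z hz, mul_add, Finset.mul_sum]
      _ = qpow (retKer Q B) N x y
          + ∑ w ∈ B, (∑ z ∈ B, qpow (retKer Q B) N x z * retKer Q B z w) * green Q w y := by
          rw [Finset.sum_add_distrib]
          congr 1
          · rw [Finset.sum_eq_single y (fun z _ hz => by simp [hz]) (fun h => absurd hy h)]
            simp
          · rw [Finset.sum_comm]
            refine Finset.sum_congr rfl fun w _ => ?_
            rw [Finset.sum_mul]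
            exact Finset.sum_congr rfl fun z _ => by ring
      _ = qpow (retKer Q B) N x y
          + ∑ w ∈ B, qpow (retKer Q B) (N + 1) x w * green Q w y := by
          congr 1
          refine Finset.sum_congr rfl fun w _ => ?_
          congr 1
          rw [qpow_retKer_succ']
          exact (tsum_eq_sum fun z hz => by
            rw [retKer_eq_zero Q B (by tauto), mul_zero]).symm

end Aux

/-- `G|_{B×B}` is the Green's function of the first-return kernel `Q^B`. -/
theorem green_restrict_eq_green_retKer {S : Type*} [Countable S] [DecidableEq S]
    (Q : S → S → ℝ≥0∞) (hG : ∀ x y, green Q x y < ⊤) (B : Finset S) :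
    ∀ x ∈ B, ∀ y ∈ B, green Q x y = ∑' k, qpow (retKer Q B) k x y := by
  intro x hx y hy
  have hF : ∀ x' ∈ B, ∀ y' ∈ B, ∑' k, qpow (retKer Q B) k x' y' ≤ green Q x' y' := by
    intro x' hx' y' hy'
    exact ENNReal.summable.tsum_le_of_sum_range_le
      (fun N => sum_qpow_retKer_le Q B N x' hx' y' hy')
  -- the remainder tends to zero
  have hrem : Filter.Tendsto
      (fun N => ∑ z ∈ B, qpow (retKer Q B) N x z * green Q z y)
      Filter.atTop (nhds 0) := by
    have hsum : ∑' N, ∑ z ∈ B, qpow (retKer Q B) N x z * green Q z y ≠ ⊤ := by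
      rw [Summable.tsum_finsetSum fun z _ => ENNReal.summable]
      have : ∀ z ∈ B, ∑' N, qpow (retKer Q B) N x z * green Q z y < ⊤ := by
        intro z hz
        rw [ENNReal.tsum_mul_right]
        exact ENNReal.mul_lt_top
          (lt_of_le_of_lt (hF x hx z hz) (hG x z)) (hG z y)
      exact (ENNReal.sum_lt_top.mpr this).ne
    exact ENNReal.tendsto_atTop_zero_of_tsum_ne_top hsum
  have hpart : Filter.Tendsto
      (fun N => ∑ k ∈ Finset.range N, qpow (retKer Q B) k x y)
      Filter.atTop (nhds (∑' k, qpow (retKer Q B) k x y)) :=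
    ENNReal.tendsto_nat_tsum _
  have htot : Filter.Tendsto
      (fun N => ∑ k ∈ Finset.range N, qpow (retKer Q B) k x y
        + ∑ z ∈ B, qpow (retKer Q B) N x z * green Q z y)
      Filter.atTop (nhds (∑' k, qpow (retKer Q B) k x y + 0)) := hpart.add hrem
  have hconst : Filter.Tendsto (fun _ : ℕ => green Q x y) Filter.atTop (nhds (green Q x y)) :=
    tendsto_const_nhds
  have heq : (fun N => ∑ k ∈ Finset.range N, qpow (retKer Q B) k x y
      + ∑ z ∈ B, qpow (retKer Q B) N x z * green Q z y) = fun _ => green Q x y := by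
    funext N
    exact (green_telescope Q B hx hy N).symm
  rw [heq] at htot
  have := tendsto_nhds_unique hconst htot
  rw [this, add_zero]
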